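/- Let n,m ≥ 1, u : {0,1}ⁿ × {0,1}ᵐ → ℝ, let (x,y) ∈ {0,1}ⁿ × {0,1}ᵐ be a corner, and let α > 0. There exist γ̂ ∈ (0,1/2) and constants C₁ > C₀ > 0 such that for every γ ≤ γ̂ and every state (p,q) ∈ (0,1)^{n+m} that is γ-near (x,y), the Red Queen vector field satisfies: (1) for every i with u(x,y) − u(x̄ⁱ,y) ≥ α, ṗ_{i,xᵢ} > C₁·p_{i,x̄ᵢ}, and for every j with u(x,y) − u(x,ȳʲ) ≤ −α, q̇_{j,yⱼ} > C₁·q_{j,ȳⱼ}; (2) for every i with u(x,y) − u(x̄ⁱ,y) ≤ −α, ṗ_{i,xᵢ} < −C₁·p_{i,x̄ᵢ}, and for every j with u(x,y) − u(x,ȳʲ) ≥ α, q̇_{j,yⱼ} < −C₁·q_{j,ȳⱼ}; (3) for every i with u(x,y) − u(x̄ⁱ,y) = 0, |ṗ_{i,xᵢ}| < C₀·p_{i,x̄ᵢ}, and for every j with u(x,y) − u(x,ȳʲ) = 0, |q̇_{j,yⱼ}| < C₀·q_{j,ȳⱼ}. -/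
import Mathlib


open MeasureTheory

noncomputable section

/-- `p_{i,b}`: the probability that gene `i` takes allele `b`
(`b = false ↦ pᵢ`, `b = true ↦ 1 − pᵢ`). -/
def coord {n : ℕ} (p : Fin n → ℝ) (i : Fin n) (b : Bool) : ℝ :=
  if b then 1 - p i else p i

/-- `x` with its `i`-th bit flipped. -/
def bflip {n : ℕ} (x : Fin n → Bool) (i : Fin n) : Fin n → Bool :=
  Function.update x i (!x i)

/-- `K_{A,i}(x,y,p,q) = Π_{i'≠i} p_{i',x_{i'}} Π_j q_{j,y_j}`. -/
def KA {n m : ℕ} (p : Fin n → ℝ) (q : Fin m → ℝ) (i : Fin n)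
    (x : Fin n → Bool) (y : Fin m → Bool) : ℝ :=
  (∏ i' ∈ Finset.univ.erase i, coord p i' (x i')) * ∏ j, coord q j (y j)

/-- `K_{B,j}(x,y,p,q) = Π_i p_{i,x_i} Π_{j'≠j} q_{j',y_{j'}}`. -/
def KB {n m : ℕ} (p : Fin n → ℝ) (q : Fin m → ℝ) (j : Fin m)
    (x : Fin n → Bool) (y : Fin m → Bool) : ℝ :=
  (∏ i, coord p i (x i)) * ∏ j' ∈ Finset.univ.erase j, coord q j' (y j')

/-- The average payoff `û(p,q) = Σ_{x,y} P(x,y) u(x,y)` where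
`P(x,y) = Π_i p_{i,x_i} Π_j q_{j,y_j}`. -/
def uhat {n m : ℕ} (u : (Fin n → Bool) → (Fin m → Bool) → ℝ)
    (p : Fin n → ℝ) (q : Fin m → ℝ) : ℝ :=
  ∑ x : Fin n → Bool, ∑ y : Fin m → Bool,
    ((∏ i, coord p i (x i)) * ∏ j, coord q j (y j)) * u x y

/-- The average payoff conditioned on `xᵢ = b`:
`û_{i,b}(p,q) = Σ_{x : x_i = b} Σ_y K_{A,i}(x,y,p,q) u(x,y)`. -/
def uhatA {n m : ℕ} (u : (Fin n → Bool) → (Fin m → Bool) → ℝ)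
    (p : Fin n → ℝ) (q : Fin m → ℝ) (i : Fin n) (b : Bool) : ℝ :=
  ∑ x : Fin n → Bool, ∑ y : Fin m → Bool,
    if x i = b then KA p q i x y * u x y else 0

/-- The average payoff conditioned on `yⱼ = b`:
`û_{j,b}(p,q) = Σ_x Σ_{y : y_j = b} K_{B,j}(x,y,p,q) u(x,y)`. -/
def uhatB {n m : ℕ} (u : (Fin n → Bool) → (Fin m → Bool) → ℝ)
    (p : Fin n → ℝ) (q : Fin m → ℝ) (j : Fin m) (b : Bool) : ℝ :=
  ∑ x : Fin n → Bool, ∑ y : Fin m → Bool,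
    if y j = b then KB p q j x y * u x y else 0

/-- `(p,q)` is a solution of the Red Queen dynamics
`ṗᵢ = pᵢ(û_{i,0}(p,q) − û(p,q))`, `q̇ⱼ = −qⱼ(û_{j,0}(p,q) − û(p,q))`
for all times `t ≥ 0`. -/
def RQSolution {n m : ℕ} (u : (Fin n → Bool) → (Fin m → Bool) → ℝ)
    (p : ℝ → Fin n → ℝ) (q : ℝ → Fin m → ℝ) : Prop :=
  (∀ t, 0 ≤ t → ∀ i, HasDerivAt (fun s => p s i)
      (p t i * (uhatA u (p t) (q t) i false - uhat u (p t) (q t))) t) ∧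
  (∀ t, 0 ≤ t → ∀ j, HasDerivAt (fun s => q s j)
      (-(q t j * (uhatB u (p t) (q t) j false - uhat u (p t) (q t)))) t)

/-- `(p,q)` takes values in the open cube `(0,1)^{n+m}` at all times `t ≥ 0`. -/
def InteriorValues {n m : ℕ} (p : ℝ → Fin n → ℝ) (q : ℝ → Fin m → ℝ) : Prop :=
  ∀ t, 0 ≤ t → (∀ i, p t i ∈ Set.Ioo (0:ℝ) 1) ∧ (∀ j, q t j ∈ Set.Ioo (0:ℝ) 1)

/-- Binary Shannon entropy. -/
def binEnt (s : ℝ) : ℝ := -(s * Real.log s) - (1 - s) * Real.log (1 - s)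

/-- The entropy `H(p) = Σᵢ h(pᵢ)` of a population. -/
def ent {n : ℕ} (p : Fin n → ℝ) : ℝ := ∑ i, binEnt (p i)

/-- The state `(p,q)` is `γ`-near the corner `(x,y)`:
`p_{i,xᵢ} > 1 − γ` for all `i` and `q_{j,yⱼ} > 1 − γ` for all `j`. -/
def Near {n m : ℕ} (γ : ℝ) (x : Fin n → Bool) (y : Fin m → Bool)
    (p : Fin n → ℝ) (q : Fin m → ℝ) : Prop :=
  (∀ i, 1 - γ < coord p i (x i)) ∧ (∀ j, 1 - γ < coord q j (y j))

/-- The Red Queen vector field component for `p_{i,b}`: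
`ṗ_{i,b} = p_{i,b}(1−p_{i,b})·Σ_{x' : x'ᵢ=b} Σ_{y'} K_{A,i}(x',y',p,q)(u(x',y') − u(x̄'ⁱ,y'))`. -/
def fieldA {n m : ℕ} (u : (Fin n → Bool) → (Fin m → Bool) → ℝ)
    (p : Fin n → ℝ) (q : Fin m → ℝ) (i : Fin n) (b : Bool) : ℝ :=
  coord p i b * (1 - coord p i b) *
    ∑ x' : Fin n → Bool, ∑ y' : Fin m → Bool,
      if x' i = b then KA p q i x' y' * (u x' y' - u (bflip x' i) y') else 0

/-- The Red Queen vector field component for `q_{j,b}`: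
`q̇_{j,b} = −q_{j,b}(1−q_{j,b})·Σ_{x'} Σ_{y' : y'ⱼ=b} K_{B,j}(x',y',p,q)(u(x',y') − u(x',ȳ'ʲ))`. -/
def fieldB {n m : ℕ} (u : (Fin n → Bool) → (Fin m → Bool) → ℝ)
    (p : Fin n → ℝ) (q : Fin m → ℝ) (j : Fin m) (b : Bool) : ℝ :=
  -(coord q j b * (1 - coord q j b) *
    ∑ x' : Fin n → Bool, ∑ y' : Fin m → Bool,
      if y' j = b then KB p q j x' y' * (u x' y' - u x' (bflip y' j)) else 0)

lemma coord_pos {n : ℕ} {p : Fin n → ℝ} {i : Fin n} (h : p i ∈ Set.Ioo (0:ℝ) 1) (b : Bool) :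
    0 < coord p i b := by cases b <;> simp [coord] <;> linarith [h.1, h.2]

lemma coord_lt_one {n : ℕ} {p : Fin n → ℝ} {i : Fin n} (h : p i ∈ Set.Ioo (0:ℝ) 1) (b : Bool) :
    coord p i b < 1 := by cases b <;> simp [coord] <;> linarith [h.1, h.2]

lemma KA_nonneg {n m : ℕ} {p : Fin n → ℝ} {q : Fin m → ℝ}
    (hp : ∀ i, p i ∈ Set.Ioo (0:ℝ) 1) (hq : ∀ j, q j ∈ Set.Ioo (0:ℝ) 1)
    (i : Fin n) (x : Fin n → Bool) (y : Fin m → Bool) : 0 ≤ KA p q i x y :=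
  mul_nonneg (Finset.prod_nonneg fun i' _ => (coord_pos (hp i') _).le)
    (Finset.prod_nonneg fun j _ => (coord_pos (hq j) _).le)

lemma KB_nonneg {n m : ℕ} {p : Fin n → ℝ} {q : Fin m → ℝ}
    (hp : ∀ i, p i ∈ Set.Ioo (0:ℝ) 1) (hq : ∀ j, q j ∈ Set.Ioo (0:ℝ) 1)
    (j : Fin m) (x : Fin n → Bool) (y : Fin m → Bool) : 0 ≤ KB p q j x y :=
  mul_nonneg (Finset.prod_nonneg fun i' _ => (coord_pos (hp i') _).le)
    (Finset.prod_nonneg fun j' _ => (coord_pos (hq j') _).le)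

lemma prod_ge_corner {k : ℕ} {γ : ℝ} (hγ0 : 0 ≤ γ) (hγ1 : γ ≤ 1/4)
    (s : Finset (Fin k)) (f : Fin k → ℝ) (hf : ∀ i ∈ s, 1 - γ ≤ f i) :
    (1 - γ) ^ s.card ≤ ∏ i ∈ s, f i := by
  rw [← Finset.prod_const]
  exact Finset.prod_le_prod (fun i _ => by linarith) hf

lemma KA_corner {n m : ℕ} {γ : ℝ} {p : Fin n → ℝ} {q : Fin m → ℝ}
    {x : Fin n → Bool} {y : Fin m → Bool}
    (hnear : Near γ x y p q) (hγ0 : 0 ≤ γ) (hγ1 : γ ≤ 1/4) (i : Fin n) :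
    1 - (n + m : ℝ) * γ ≤ KA p q i x y := by
  have h1 : (1 - γ) ^ (Finset.univ.erase i).card
      ≤ ∏ i' ∈ Finset.univ.erase i, coord p i' (x i') :=
    prod_ge_corner hγ0 hγ1 _ _ fun i' _ => (hnear.1 i').le
  have h2 : (1 - γ) ^ (Finset.univ : Finset (Fin m)).card ≤ ∏ j, coord q j (y j) :=
    prod_ge_corner hγ0 hγ1 _ _ fun j _ => (hnear.2 j).le
  have hcard1 : (Finset.univ.erase i).card = n - 1 := by
    rw [Finset.card_erase_of_mem (Finset.mem_univ i)]; simp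
  have hcard2 : (Finset.univ : Finset (Fin m)).card = m := by simp
  have hpow : (1 - γ) ^ (n + m) ≤ (1 - γ) ^ ((n - 1) + m) :=
    pow_le_pow_of_le_one (by linarith) (by linarith)
      (Nat.add_le_add_right (Nat.sub_le n 1) m)
  have hbern : 1 + (n + m : ℝ) * (-γ) ≤ (1 + (-γ)) ^ (n + m) := by
    have := one_add_mul_le_pow (a := -γ) (by linarith) (n + m)
    simpa using this
  have hKA : (1 - γ) ^ ((n - 1) + m) ≤ KA p q i x y := by
    rw [hcard1] at h1; rw [hcard2] at h2
    rw [KA, pow_add]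
    exact mul_le_mul h1 h2 (pow_nonneg (by linarith) _)
      (le_trans (pow_nonneg (by linarith) _) h1)
  calc 1 - (n + m : ℝ) * γ = 1 + (n + m : ℝ) * (-γ) := by ring
    _ ≤ (1 + (-γ)) ^ (n + m) := hbern
    _ = (1 - γ) ^ (n + m) := by rw [show (1:ℝ) + -γ = 1 - γ from by ring]
    _ ≤ (1 - γ) ^ ((n-1) + m) := hpow
    _ ≤ KA p q i x y := hKA

lemma KB_corner {n m : ℕ} {γ : ℝ} {p : Fin n → ℝ} {q : Fin m → ℝ}
    {x : Fin n → Bool} {y : Fin m → Bool}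
    (hnear : Near γ x y p q) (hγ0 : 0 ≤ γ) (hγ1 : γ ≤ 1/4) (j : Fin m) :
    1 - (n + m : ℝ) * γ ≤ KB p q j x y := by
  have h1 : (1 - γ) ^ (Finset.univ : Finset (Fin n)).card ≤ ∏ i, coord p i (x i) :=
    prod_ge_corner hγ0 hγ1 _ _ fun i _ => (hnear.1 i).le
  have h2 : (1 - γ) ^ (Finset.univ.erase j).card
      ≤ ∏ j' ∈ Finset.univ.erase j, coord q j' (y j') :=
    prod_ge_corner hγ0 hγ1 _ _ fun j' _ => (hnear.2 j').le
  have hcard1 : (Finset.univ : Finset (Fin n)).card = n := by simp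
  have hcard2 : (Finset.univ.erase j).card = m - 1 := by
    rw [Finset.card_erase_of_mem (Finset.mem_univ j)]; simp
  have hpow : (1 - γ) ^ (n + m) ≤ (1 - γ) ^ (n + (m - 1)) :=
    pow_le_pow_of_le_one (by linarith) (by linarith)
      (Nat.add_le_add_left (Nat.sub_le m 1) n)
  have hbern : 1 + (n + m : ℝ) * (-γ) ≤ (1 + (-γ)) ^ (n + m) := by
    have := one_add_mul_le_pow (a := -γ) (by linarith) (n + m)
    simpa using this
  have hKB : (1 - γ) ^ (n + (m - 1)) ≤ KB p q j x y := by
    rw [hcard1] at h1; rw [hcard2] at h2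
    rw [KB, pow_add]
    exact mul_le_mul h1 h2 (pow_nonneg (by linarith) _)
      (le_trans (pow_nonneg (by linarith) _) h1)
  calc 1 - (n + m : ℝ) * γ = 1 + (n + m : ℝ) * (-γ) := by ring
    _ ≤ (1 + (-γ)) ^ (n + m) := hbern
    _ = (1 - γ) ^ (n + m) := by rw [show (1:ℝ) + -γ = 1 - γ from by ring]
    _ ≤ (1 - γ) ^ (n + (m-1)) := hpow
    _ ≤ KB p q j x y := hKB

lemma sum_prod_coord {m : ℕ} (q : Fin m → ℝ) :
    ∑ y : Fin m → Bool, ∏ j, coord q j (y j) = 1 := by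
  rw [show (Finset.univ : Finset (Fin m → Bool)) = Fintype.piFinset (fun _ => Finset.univ) from
      Fintype.piFinset_univ.symm, ← Finset.prod_univ_sum]
  exact Finset.prod_eq_one fun j _ => by simp [coord]

lemma sum_constrained {n : ℕ} (p : Fin n → ℝ) (i : Fin n) (b : Bool) :
    ∑ x' : Fin n → Bool,
      (if x' i = b then ∏ i' ∈ Finset.univ.erase i, coord p i' (x' i') else 0) = 1 := by
  set g : Fin n → Bool → ℝ :=
    fun i' b' => if i' = i then (if b' = b then (1:ℝ) else 0) else coord p i' b' with hg
  have h : ∀ x' : Fin n → Bool,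
      (if x' i = b then ∏ i' ∈ Finset.univ.erase i, coord p i' (x' i') else 0)
      = ∏ i', g i' (x' i') := by
    intro x'
    rw [← Finset.mul_prod_erase Finset.univ (fun i' => g i' (x' i')) (Finset.mem_univ i)]
    have h2 : ∏ i' ∈ Finset.univ.erase i, g i' (x' i')
        = ∏ i' ∈ Finset.univ.erase i, coord p i' (x' i') :=
      Finset.prod_congr rfl fun i' hi' => by simp [hg, Finset.ne_of_mem_erase hi']
    rw [h2, hg]
    by_cases hb : x' i = b <;> simp [hb]
  simp_rw [h]
  rw [show (Finset.univ : Finset (Fin n → Bool)) = Fintype.piFinset (fun _ => Finset.univ) from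
      Fintype.piFinset_univ.symm, ← Finset.prod_univ_sum]
  refine Finset.prod_eq_one fun i' _ => ?_
  by_cases hi : i' = i
  · simp [hg, hi]
  · simp [hg, hi, coord]

lemma sumA_w {n m : ℕ} (p : Fin n → ℝ) (q : Fin m → ℝ) (i : Fin n) (b : Bool) :
    ∑ z : (Fin n → Bool) × (Fin m → Bool),
      (if z.1 i = b then KA p q i z.1 z.2 else 0) = 1 := by
  rw [Fintype.sum_prod_type]
  have h : ∀ x' : Fin n → Bool,
      ∑ y' : Fin m → Bool, (if x' i = b then KA p q i x' y' else 0)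
      = (if x' i = b then ∏ i' ∈ Finset.univ.erase i, coord p i' (x' i') else 0) := by
    intro x'
    by_cases hb : x' i = b
    · simp only [hb, if_pos]
      simp only [KA, ← Finset.mul_sum, sum_prod_coord, mul_one]
    · simp [hb]
  simp_rw [h]
  exact sum_constrained p i b

lemma sumB_w {n m : ℕ} (p : Fin n → ℝ) (q : Fin m → ℝ) (j : Fin m) (b : Bool) :
    ∑ z : (Fin n → Bool) × (Fin m → Bool),
      (if z.2 j = b then KB p q j z.1 z.2 else 0) = 1 := by
  rw [Fintype.sum_prod_type]
  have h : ∀ x' : Fin n → Bool,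
      ∑ y' : Fin m → Bool, (if y' j = b then KB p q j x' y' else 0)
      = (∏ i, coord p i (x' i)) *
        ∑ y' : Fin m → Bool,
          (if y' j = b then ∏ j' ∈ Finset.univ.erase j, coord q j' (y' j') else 0) := by
    intro x'
    rw [Finset.mul_sum]
    refine Finset.sum_congr rfl fun y' _ => ?_
    by_cases hb : y' j = b <;> simp [hb, KB]
  simp_rw [h, sum_constrained q j b, mul_one]
  exact sum_prod_coord p
lemma core_est {ι : Type*} [Fintype ι] [DecidableEq ι] (w d : ι → ℝ) (z₀ : ι) (ε B : ℝ)
    (hw0 : ∀ z, 0 ≤ w z) (hw1 : ∑ z, w z = 1) (hz : 1 - ε ≤ w z₀)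
    (hB : 0 ≤ B) (hd : ∀ z, |d z| ≤ B) :
    |(∑ z, w z * d z) - d z₀| ≤ 2 * B * ε := by
  have h1 : (∑ z, w z * d z) - d z₀ = ∑ z, w z * (d z - d z₀) := by
    simp [mul_sub, Finset.sum_sub_distrib, ← Finset.sum_mul, hw1]
  rw [h1]
  have hsplit : ∑ z, w z * (d z - d z₀)
      = ∑ z ∈ Finset.univ.erase z₀, w z * (d z - d z₀) := by
    rw [← Finset.sum_erase_add Finset.univ _ (Finset.mem_univ z₀)]; simp
  rw [hsplit]
  have hsum_erase : ∑ z ∈ Finset.univ.erase z₀, w z = 1 - w z₀ := by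
    have := Finset.sum_erase_add Finset.univ w (Finset.mem_univ z₀); linarith
  calc |∑ z ∈ Finset.univ.erase z₀, w z * (d z - d z₀)|
      ≤ ∑ z ∈ Finset.univ.erase z₀, |w z * (d z - d z₀)| := Finset.abs_sum_le_sum_abs _ _
    _ ≤ ∑ z ∈ Finset.univ.erase z₀, w z * (2 * B) := by
        refine Finset.sum_le_sum fun z _ => ?_
        rw [abs_mul, abs_of_nonneg (hw0 z)]
        refine mul_le_mul_of_nonneg_left ?_ (hw0 z)
        calc |d z - d z₀| ≤ |d z| + |d z₀| := abs_sub _ _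
          _ ≤ B + B := add_le_add (hd z) (hd z₀)
          _ = 2 * B := by ring
    _ = (∑ z ∈ Finset.univ.erase z₀, w z) * (2 * B) := by rw [Finset.sum_mul]
    _ ≤ ε * (2 * B) := by rw [hsum_erase]; nlinarith
    _ = 2 * B * ε := by ring

lemma estA {n m : ℕ} (u : (Fin n → Bool) → (Fin m → Bool) → ℝ) {M γ : ℝ}
    (hM0 : 0 ≤ M) (hM : ∀ a b, |u a b| ≤ M)
    {p : Fin n → ℝ} {q : Fin m → ℝ} {x : Fin n → Bool} {y : Fin m → Bool}
    (hp : ∀ i, p i ∈ Set.Ioo (0:ℝ) 1) (hq : ∀ j, q j ∈ Set.Ioo (0:ℝ) 1)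
    (hnear : Near γ x y p q) (hγ0 : 0 ≤ γ) (hγ1 : γ ≤ 1/4) (i : Fin n) :
    |(∑ x' : Fin n → Bool, ∑ y' : Fin m → Bool,
        if x' i = x i then KA p q i x' y' * (u x' y' - u (bflip x' i) y') else 0)
      - (u x y - u (bflip x i) y)| ≤ 2 * (2 * M) * (((n:ℝ) + m) * γ) := by
  classical
  set w : (Fin n → Bool) × (Fin m → Bool) → ℝ :=
    fun z => if z.1 i = x i then KA p q i z.1 z.2 else 0 with hw
  set d : (Fin n → Bool) × (Fin m → Bool) → ℝ :=
    fun z => u z.1 z.2 - u (bflip z.1 i) z.2 with hd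
  have hre : (∑ x' : Fin n → Bool, ∑ y' : Fin m → Bool,
        if x' i = x i then KA p q i x' y' * (u x' y' - u (bflip x' i) y') else 0)
      = ∑ z : (Fin n → Bool) × (Fin m → Bool), w z * d z := by
    rw [Fintype.sum_prod_type]
    refine Finset.sum_congr rfl fun x' _ => Finset.sum_congr rfl fun y' _ => ?_
    by_cases h : x' i = x i <;> simp [hw, hd, h]
  rw [hre]
  have hz₀ : d (x, y) = u x y - u (bflip x i) y := rfl
  rw [← hz₀]
  refine core_est w d (x, y) (((n:ℝ) + m) * γ) (2 * M) ?_ ?_ ?_ (by linarith) ?_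
  · intro z; by_cases h : z.1 i = x i <;> simp [hw, h, KA_nonneg hp hq]
  · exact sumA_w p q i (x i)
  · have : w (x, y) = KA p q i x y := by simp [hw]
    rw [this]
    have := KA_corner hnear hγ0 hγ1 i
    linarith [this]
  · intro z
    calc |d z| ≤ |u z.1 z.2| + |u (bflip z.1 i) z.2| := abs_sub _ _
      _ ≤ M + M := add_le_add (hM _ _) (hM _ _)
      _ = 2 * M := by ring

lemma estB {n m : ℕ} (u : (Fin n → Bool) → (Fin m → Bool) → ℝ) {M γ : ℝ}
    (hM0 : 0 ≤ M) (hM : ∀ a b, |u a b| ≤ M)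
    {p : Fin n → ℝ} {q : Fin m → ℝ} {x : Fin n → Bool} {y : Fin m → Bool}
    (hp : ∀ i, p i ∈ Set.Ioo (0:ℝ) 1) (hq : ∀ j, q j ∈ Set.Ioo (0:ℝ) 1)
    (hnear : Near γ x y p q) (hγ0 : 0 ≤ γ) (hγ1 : γ ≤ 1/4) (j : Fin m) :
    |(∑ x' : Fin n → Bool, ∑ y' : Fin m → Bool,
        if y' j = y j then KB p q j x' y' * (u x' y' - u x' (bflip y' j)) else 0)
      - (u x y - u x (bflip y j))| ≤ 2 * (2 * M) * (((n:ℝ) + m) * γ) := by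
  classical
  set w : (Fin n → Bool) × (Fin m → Bool) → ℝ :=
    fun z => if z.2 j = y j then KB p q j z.1 z.2 else 0 with hw
  set d : (Fin n → Bool) × (Fin m → Bool) → ℝ :=
    fun z => u z.1 z.2 - u z.1 (bflip z.2 j) with hd
  have hre : (∑ x' : Fin n → Bool, ∑ y' : Fin m → Bool,
        if y' j = y j then KB p q j x' y' * (u x' y' - u x' (bflip y' j)) else 0)
      = ∑ z : (Fin n → Bool) × (Fin m → Bool), w z * d z := by
    rw [Fintype.sum_prod_type]
    refine Finset.sum_congr rfl fun x' _ => Finset.sum_congr rfl fun y' _ => ?_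
    by_cases h : y' j = y j <;> simp [hw, hd, h]
  rw [hre]
  have hz₀ : d (x, y) = u x y - u x (bflip y j) := rfl
  rw [← hz₀]
  refine core_est w d (x, y) (((n:ℝ) + m) * γ) (2 * M) ?_ ?_ ?_ (by linarith) ?_
  · intro z; by_cases h : z.2 j = y j <;> simp [hw, h, KB_nonneg hp hq]
  · exact sumB_w p q j (y j)
  · have : w (x, y) = KB p q j x y := by simp [hw]
    rw [this]
    have := KB_corner hnear hγ0 hγ1 j
    linarith [this]
  · intro z
    calc |d z| ≤ |u z.1 z.2| + |u z.1 (bflip z.2 j)| := abs_sub _ _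
      _ ≤ M + M := add_le_add (hM _ _) (hM _ _)
      _ = 2 * M := by ring

lemma coord_not' {n : ℕ} (p : Fin n → ℝ) (i : Fin n) (b : Bool) :
    coord p i (!b) = 1 - coord p i b := by
  cases b <;> simp [coord]


set_option maxHeartbeats 2000000 in
/-- (Claim 4.1 of the paper.) For any corner `(x,y)` and any
`α > 0` there are `γ̂ ∈ (0,1/2)` and constants `C₁ > C₀ > 0` such that for
every `γ ≤ γ̂` and every state `(p,q) ∈ (0,1)^{n+m}` that is `γ`-near `(x,y)`,
the Red Queen vector field satisfies the three sign/speed estimates. -/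
theorem stmt11 {n m : ℕ} (hn : 1 ≤ n) (hm : 1 ≤ m)
    (u : (Fin n → Bool) → (Fin m → Bool) → ℝ)
    (x : Fin n → Bool) (y : Fin m → Bool) (α : ℝ) (hα : 0 < α) :
    ∃ γhat ∈ Set.Ioo (0:ℝ) (1/2), ∃ C₁ C₀ : ℝ, 0 < C₀ ∧ C₀ < C₁ ∧
      ∀ γ ≤ γhat, ∀ (p : Fin n → ℝ) (q : Fin m → ℝ),
        (∀ i, p i ∈ Set.Ioo (0:ℝ) 1) → (∀ j, q j ∈ Set.Ioo (0:ℝ) 1) →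
        Near γ x y p q →
        (∀ i, α ≤ u x y - u (bflip x i) y →
          C₁ * coord p i (!(x i)) < fieldA u p q i (x i)) ∧
        (∀ j, u x y - u x (bflip y j) ≤ -α →
          C₁ * coord q j (!(y j)) < fieldB u p q j (y j)) ∧
        (∀ i, u x y - u (bflip x i) y ≤ -α →
          fieldA u p q i (x i) < -(C₁ * coord p i (!(x i)))) ∧
        (∀ j, α ≤ u x y - u x (bflip y j) →
          fieldB u p q j (y j) < -(C₁ * coord q j (!(y j)))) ∧
        (∀ i, u x y - u (bflip x i) y = 0 →
          |fieldA u p q i (x i)| < C₀ * coord p i (!(x i))) ∧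
        (∀ j, u x y - u x (bflip y j) = 0 →
          |fieldB u p q j (y j)| < C₀ * coord q j (!(y j))) := by
  classical
  obtain ⟨M, hMdef⟩ : ∃ M : ℝ, M = (∑ a : Fin n → Bool, ∑ b : Fin m → Bool, |u a b|) + 1 :=
    ⟨_, rfl⟩
  have hsum_nonneg : 0 ≤ ∑ a : Fin n → Bool, ∑ b : Fin m → Bool, |u a b| :=
    Finset.sum_nonneg fun a _ => Finset.sum_nonneg fun b _ => abs_nonneg _
  have hM1 : 1 ≤ M := by rw [hMdef]; linarith
  have hM0 : 0 < M := by linarith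
  have hMu : ∀ a b, |u a b| ≤ M := by
    intro a b
    have h1 : |u a b| ≤ ∑ b' : Fin m → Bool, |u a b'| :=
      Finset.single_le_sum (f := fun b' => |u a b'|) (fun b' _ => abs_nonneg _)
        (Finset.mem_univ b)
    have h2 : (∑ b' : Fin m → Bool, |u a b'|)
        ≤ ∑ a' : Fin n → Bool, ∑ b' : Fin m → Bool, |u a' b'| :=
      Finset.single_le_sum (f := fun a' => ∑ b' : Fin m → Bool, |u a' b'|)
        (fun a' _ => Finset.sum_nonneg fun b' _ => abs_nonneg _) (Finset.mem_univ a)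
    rw [hMdef]; linarith
  clear hMdef hsum_nonneg
  have hN1 : 1 ≤ (n : ℝ) + m := by
    have h1 : (1:ℝ) ≤ (n:ℝ) := by exact_mod_cast hn
    have h2 : (0:ℝ) ≤ (m:ℝ) := by positivity
    linarith
  have hN0 : 0 < (n : ℝ) + m := by linarith
  refine ⟨min (1/4) (α / (64 * M * ((n:ℝ) + m))), ⟨?_, ?_⟩, α/4, α/8,
    by linarith, by linarith, ?_⟩
  · exact lt_min (by norm_num) (by positivity)
  · calc min (1/4) (α / (64 * M * ((n:ℝ) + m))) ≤ 1/4 := min_le_left _ _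
      _ < 1/2 := by norm_num
  intro γ hγ p q hp hq hnear
  rcases lt_or_ge γ 0 with hγ0 | hγ0
  · exfalso
    have h1 := hnear.1 ⟨0, hn⟩
    have h2 := coord_lt_one (hp ⟨0, hn⟩) (x ⟨0, hn⟩)
    linarith
  have hγ14 : γ ≤ 1/4 := le_trans hγ (min_le_left _ _)
  have hγα : γ ≤ α / (64 * M * ((n:ℝ) + m)) := le_trans hγ (min_le_right _ _)
  have hγα' : γ * (64 * M * ((n:ℝ) + m)) ≤ α := by
    rw [← le_div_iff₀ (by positivity)]; exact hγα
  have h16 : 2 * (2 * M) * (((n:ℝ) + m) * γ) ≤ α / 16 := by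
    have h : 2 * (2 * M) * (((n:ℝ) + m) * γ) = (γ * (64 * M * ((n:ℝ) + m))) / 16 := by ring
    rw [h]; linarith
  refine ⟨?_, ?_, ?_, ?_, ?_, ?_⟩
  · -- (1) A side, D ≥ α
    intro i hD
    have hest := estA u hM0.le hMu hp hq hnear hγ0 hγ14 i
    rw [coord_not', fieldA]
    set S := ∑ x' : Fin n → Bool, ∑ y' : Fin m → Bool,
        if x' i = x i then KA p q i x' y' * (u x' y' - u (bflip x' i) y') else 0 with hS
    clear_value S
    clear hS
    have habs := abs_le.mp hest
    have hSlb : 15 * α / 16 ≤ S := by linarith [habs.1]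
    set a := coord p i (x i) with ha
    clear_value a
    have ha1 : a < 1 := ha ▸ coord_lt_one (hp i) _
    have ha34 : 3/4 < a := by have := hnear.1 i; rw [← ha] at this; linarith
    have haS : α/4 < a * S := by nlinarith
    calc α/4 * (1 - a) < (a * S) * (1 - a) :=
          mul_lt_mul_of_pos_right haS (by linarith)
      _ = a * (1 - a) * S := by ring
  · -- (2) B side, D ≤ -α
    intro j hD
    have hest := estB u hM0.le hMu hp hq hnear hγ0 hγ14 j
    rw [coord_not', fieldB]
    set T := ∑ x' : Fin n → Bool, ∑ y' : Fin m → Bool,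
        if y' j = y j then KB p q j x' y' * (u x' y' - u x' (bflip y' j)) else 0 with hT
    clear_value T
    clear hT
    have habs := abs_le.mp hest
    have hTub : T ≤ -(15 * α / 16) := by linarith [habs.2]
    set b := coord q j (y j) with hb
    clear_value b
    have hb1 : b < 1 := hb ▸ coord_lt_one (hq j) _
    have hb34 : 3/4 < b := by have := hnear.2 j; rw [← hb] at this; linarith
    have hbT : b * T < -(α/4) := by nlinarith
    calc α/4 * (1 - b) < (-(b * T)) * (1 - b) := by
          apply mul_lt_mul_of_pos_right _ (by linarith)
          linarith
      _ = -(b * (1 - b) * T) := by ring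
  · -- (3) A side, D ≤ -α
    intro i hD
    have hest := estA u hM0.le hMu hp hq hnear hγ0 hγ14 i
    rw [coord_not', fieldA]
    set S := ∑ x' : Fin n → Bool, ∑ y' : Fin m → Bool,
        if x' i = x i then KA p q i x' y' * (u x' y' - u (bflip x' i) y') else 0 with hS
    clear_value S
    clear hS
    have habs := abs_le.mp hest
    have hSub : S ≤ -(15 * α / 16) := by linarith [habs.2]
    set a := coord p i (x i) with ha
    clear_value a
    have ha1 : a < 1 := ha ▸ coord_lt_one (hp i) _
    have ha34 : 3/4 < a := by have := hnear.1 i; rw [← ha] at this; linarith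
    have haS : a * S < -(α/4) := by nlinarith
    calc a * (1 - a) * S = (a * S) * (1 - a) := by ring
      _ < (-(α/4)) * (1 - a) := mul_lt_mul_of_pos_right haS (by linarith)
      _ = -(α/4 * (1 - a)) := by ring
  · -- (4) B side, D ≥ α
    intro j hD
    have hest := estB u hM0.le hMu hp hq hnear hγ0 hγ14 j
    rw [coord_not', fieldB]
    set T := ∑ x' : Fin n → Bool, ∑ y' : Fin m → Bool,
        if y' j = y j then KB p q j x' y' * (u x' y' - u x' (bflip y' j)) else 0 with hT
    clear_value T
    clear hT
    have habs := abs_le.mp hest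
    have hTlb : 15 * α / 16 ≤ T := by linarith [habs.1]
    set b := coord q j (y j) with hb
    clear_value b
    have hb1 : b < 1 := hb ▸ coord_lt_one (hq j) _
    have hb34 : 3/4 < b := by have := hnear.2 j; rw [← hb] at this; linarith
    have hbT : α/4 < b * T := by nlinarith
    calc -(b * (1 - b) * T) = (-(b * T)) * (1 - b) := by ring
      _ < (-(α/4)) * (1 - b) := mul_lt_mul_of_pos_right (by linarith) (by linarith)
      _ = -(α/4 * (1 - b)) := by ring
  · -- (5) A side, D = 0
    intro i hD
    have hest := estA u hM0.le hMu hp hq hnear hγ0 hγ14 i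
    rw [hD, sub_zero] at hest
    rw [coord_not', fieldA]
    set S := ∑ x' : Fin n → Bool, ∑ y' : Fin m → Bool,
        if x' i = x i then KA p q i x' y' * (u x' y' - u (bflip x' i) y') else 0 with hS
    clear_value S
    clear hS
    have hSabs : |S| ≤ α/16 := by linarith
    set a := coord p i (x i) with ha
    clear_value a
    have ha1 : a < 1 := ha ▸ coord_lt_one (hp i) _
    have ha0 : 0 < a := ha ▸ coord_pos (hp i) _
    have h1a : 0 < 1 - a := by linarith
    have habs2 : |a * (1 - a) * S| = a * (1 - a) * |S| := by
      rw [abs_mul, abs_of_nonneg (mul_nonneg ha0.le h1a.le)]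
    rw [habs2]
    nlinarith [mul_le_mul_of_nonneg_right ha1.le (mul_nonneg h1a.le (abs_nonneg S)),
      mul_le_mul_of_nonneg_left hSabs h1a.le, mul_pos h1a hα]
  · -- (6) B side, D = 0
    intro j hD
    have hest := estB u hM0.le hMu hp hq hnear hγ0 hγ14 j
    rw [hD, sub_zero] at hest
    rw [coord_not', fieldB]
    set T := ∑ x' : Fin n → Bool, ∑ y' : Fin m → Bool,
        if y' j = y j then KB p q j x' y' * (u x' y' - u x' (bflip y' j)) else 0 with hT
    clear_value T
    clear hT
    have hTabs : |T| ≤ α/16 := by linarith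
    set b := coord q j (y j) with hb
    clear_value b
    have hb1 : b < 1 := hb ▸ coord_lt_one (hq j) _
    have hb0 : 0 < b := hb ▸ coord_pos (hq j) _
    have h1b : 0 < 1 - b := by linarith
    have habs2 : |-(b * (1 - b) * T)| = b * (1 - b) * |T| := by
      rw [abs_neg, abs_mul, abs_of_nonneg (mul_nonneg hb0.le h1b.le)]
    rw [habs2]
    nlinarith [mul_le_mul_of_nonneg_right hb1.le (mul_nonneg h1b.le (abs_nonneg T)),
      mul_le_mul_of_nonneg_left hTabs h1b.le, mul_pos h1b hα]
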